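/- arXiv:2205.14067 — 3 statements merged into one kernel-verified Lean document; each statement's English description precedes it below -/
import Mathlib

section
/- If Z ~ N(0,1) and we define W with density f_W(w) = α w^{α-1} exp(-w^α) for w > 0 (Weibull with shape α ∈ (0,2]), and E is exponential with mean 1 independent of a positive stable random variable P with index α/2, then P/E has the same distribution as 1/W². Equivalently, the random variable 1/W² where W is Weibull(α) has the same law as the ratio of a positive α/2-stable variable to an independent standard exponential. -/
open MeasureTheory ProbabilityTheory

open Real Set Filter

private lemma weibull_tail {α : ℝ} (hα : 0 < α) {a : ℝ} (ha : 0 < a) :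
    ∫⁻ w in Set.Ici a, ENNReal.ofReal (if 0 < w then α * w ^ (α - 1) * Real.exp (-(w ^ α)) else 0)
      = ENNReal.ofReal (Real.exp (-(a ^ α))) := by
  rw [← setLIntegral_congr (Ioi_ae_eq_Ici (a := a))]
  rw [setLIntegral_congr_fun_ae measurableSet_Ioi
    (ae_of_all _ fun w (hw : a < w) => by rw [if_pos (ha.trans hw)])]
  have hpos : ∀ w ∈ Set.Ioi a, 0 ≤ α * w ^ (α - 1) * Real.exp (-(w ^ α)) := fun w hw =>
    mul_nonneg (mul_nonneg hα.le (Real.rpow_nonneg (ha.trans hw).le _)) (Real.exp_pos _).le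
  have hderiv : ∀ w ∈ Set.Ioi a, HasDerivAt (fun w => -Real.exp (-(w ^ α)))
      (α * w ^ (α - 1) * Real.exp (-(w ^ α))) w := by
    intro w hw
    have h1 : HasDerivAt (fun w : ℝ => w ^ α) (α * w ^ (α - 1)) w :=
      Real.hasDerivAt_rpow_const (Or.inl (ne_of_gt (ha.trans hw)))
    have h2 : HasDerivAt (fun w => -Real.exp (-(w ^ α)))
        (-(Real.exp (-(w ^ α)) * -(α * w ^ (α - 1)))) w := (h1.neg.exp).neg
    convert h2 using 1
    ring
  have htop : Tendsto (fun w : ℝ => -Real.exp (-(w ^ α))) atTop (nhds 0) := by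
    rw [← neg_zero]
    exact (Real.tendsto_exp_atBot.comp (tendsto_neg_atTop_atBot.comp (tendsto_rpow_atTop hα))).neg
  have hcont : ContinuousWithinAt (fun w : ℝ => -Real.exp (-(w ^ α))) (Set.Ici a) a := by
    have h1 : ContinuousAt (fun w : ℝ => w ^ α) a :=
      Real.continuousAt_rpow_const a α (Or.inl (ne_of_gt ha))
    exact ((Real.continuous_exp.continuousAt.comp h1.neg).neg).continuousWithinAt
  have hint : IntegrableOn (fun w => α * w ^ (α - 1) * Real.exp (-(w ^ α))) (Set.Ioi a) :=
    integrableOn_Ioi_deriv_of_nonneg hcont hderiv hpos htop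
  have hval : ∫ w in Set.Ioi a, α * w ^ (α - 1) * Real.exp (-(w ^ α)) = Real.exp (-(a ^ α)) := by
    rw [integral_Ioi_of_hasDerivAt_of_nonneg hcont hderiv hpos htop]
    ring
  rw [← ofReal_integral_eq_lintegral_ofReal hint
    ((ae_restrict_iff' measurableSet_Ioi).mpr (ae_of_all _ hpos)), hval]

private lemma exp_tail {b : ℝ} (hb : 0 ≤ b) :
    ∫⁻ x in Set.Ici b, ENNReal.ofReal (if 0 < x then Real.exp (-x) else 0)
      = ENNReal.ofReal (Real.exp (-b)) := by
  rw [← setLIntegral_congr (Ioi_ae_eq_Ici (a := b))]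
  rw [setLIntegral_congr_fun_ae measurableSet_Ioi
    (ae_of_all _ fun x (hx : b < x) => by rw [if_pos (lt_of_le_of_lt hb hx)])]
  have hint : IntegrableOn (fun x : ℝ => Real.exp (-x)) (Set.Ioi b) := by
    simpa using exp_neg_integrableOn_Ioi b one_pos
  rw [← ofReal_integral_eq_lintegral_ofReal hint
    ((ae_restrict_iff' measurableSet_Ioi).mpr (ae_of_all _ fun x _ => (Real.exp_pos _).le)),
    integral_exp_neg_Ioi]

/-- If `E` is standard exponential, `W` is Weibull with shape `α`, and the positive
stable variable `P` (index `α/2`, characterized by its Laplace transform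
`E[e^{-sP}] = exp(-s^{α/2})`) is independent of `E`, then `P/E` has the same
distribution as `1/W²`. -/
theorem stmt0 {Ω : Type*} [MeasurableSpace Ω] (μ : Measure Ω) [IsProbabilityMeasure μ]
    (α : ℝ) (hα : 0 < α) (hα2 : α ≤ 2)
    (P E W : Ω → ℝ) (hPm : Measurable P) (hEm : Measurable E) (hWm : Measurable W)
    (hPE : IndepFun P E μ)
    (hE : Measure.map E μ = volume.withDensity fun x =>
      ENNReal.ofReal (if 0 < x then Real.exp (-x) else 0))
    (hW : Measure.map W μ = volume.withDensity fun w =>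
      ENNReal.ofReal (if 0 < w then α * w ^ (α - 1) * Real.exp (-(w ^ α)) else 0))
    (hP : ∀ s : ℝ, 0 ≤ s → ∫ ω, Real.exp (-(s * P ω)) ∂μ = Real.exp (-(s ^ (α / 2)))) :
    Measure.map (fun ω => P ω / E ω) μ = Measure.map (fun ω => 1 / (W ω) ^ 2) μ := by
  -- integrability of the Laplace functional
  have hint : ∀ s : ℝ, 0 ≤ s → Integrable (fun ω => Real.exp (-(s * P ω))) μ := by
    intro s hs
    by_contra h
    have h2 := hP s hs
    rw [integral_undef h] at h2
    exact (Real.exp_pos _).ne' h2.symm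
  -- E > 0 a.e.
  have hEpos : μ {ω | E ω ≤ 0} = 0 := by
    have : μ {ω | E ω ≤ 0} = (Measure.map E μ) (Set.Iic 0) := by
      rw [Measure.map_apply hEm measurableSet_Iic]; rfl
    rw [this, hE, withDensity_apply _ measurableSet_Iic]
    rw [setLIntegral_congr_fun_ae measurableSet_Iic
      (ae_of_all _ fun x (hx : x ≤ 0) => by rw [if_neg (not_lt.mpr hx), ENNReal.ofReal_zero])]
    simp
  -- W > 0 a.e.
  have hWpos : μ {ω | W ω ≤ 0} = 0 := by
    have : μ {ω | W ω ≤ 0} = (Measure.map W μ) (Set.Iic 0) := by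
      rw [Measure.map_apply hWm measurableSet_Iic]; rfl
    rw [this, hW, withDensity_apply _ measurableSet_Iic]
    rw [setLIntegral_congr_fun_ae measurableSet_Iic
      (ae_of_all _ fun x (hx : x ≤ 0) => by rw [if_neg (not_lt.mpr hx), ENNReal.ofReal_zero])]
    simp
  -- P > 0 a.e.
  have hPneg : μ {ω | P ω ≤ 0} = 0 := by
    have hA : MeasurableSet {ω | P ω ≤ 0} := hPm measurableSet_Iic
    have hkey : ∀ n : ℕ, (μ {ω | P ω ≤ 0}).toReal ≤ Real.exp (-((n : ℝ) ^ (α / 2))) := by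
      intro n
      have hs : (0:ℝ) ≤ n := n.cast_nonneg
      have hI := hint n hs
      have h1 : (μ {ω | P ω ≤ 0}).toReal = ∫ ω in {ω | P ω ≤ 0}, (1:ℝ) ∂μ := by
        rw [setIntegral_const]; simp [measureReal_def]
      have h2 : ∫ ω in {ω | P ω ≤ 0}, (1:ℝ) ∂μ
          ≤ ∫ ω in {ω | P ω ≤ 0}, Real.exp (-((n:ℝ) * P ω)) ∂μ := by
        refine setIntegral_mono_on ((integrableOn_const_iff).mpr (Or.inr (measure_lt_top μ _)))
          hI.integrableOn hA fun ω hω => ?_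
        have : (n:ℝ) * P ω ≤ 0 := mul_nonpos_of_nonneg_of_nonpos hs hω
        exact Real.one_le_exp (by linarith)
      have h3 : ∫ ω in {ω | P ω ≤ 0}, Real.exp (-((n:ℝ) * P ω)) ∂μ
          ≤ ∫ ω, Real.exp (-((n:ℝ) * P ω)) ∂μ :=
        setIntegral_le_integral hI (ae_of_all _ fun ω => (Real.exp_pos _).le)
      rw [hP n hs] at h3
      linarith
    have hc0 : (μ {ω | P ω ≤ 0}).toReal ≤ 0 := by
      have ht : Filter.Tendsto (fun n : ℕ => Real.exp (-((n:ℝ) ^ (α / 2)))) atTop (nhds 0) := by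
        refine Real.tendsto_exp_atBot.comp (tendsto_neg_atTop_atBot.comp ?_)
        exact (tendsto_rpow_atTop (by positivity)).comp tendsto_natCast_atTop_atTop
      exact ge_of_tendsto ht (Filter.Eventually.of_forall hkey)
    have := (ENNReal.toReal_eq_zero_iff _).mp (le_antisymm hc0 ENNReal.toReal_nonneg)
    rcases this with h | h
    · exact h
    · exact absurd h (measure_ne_top μ _)

  -- reduce to CDFs
  have hmW : Measurable fun w : ℝ => 1 / w ^ 2 :=
    measurable_const.div ((measurable_id.pow_const 2))
  have hmWo : Measurable fun ω => 1 / W ω ^ 2 := measurable_const.div (hWm.pow_const 2)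
  haveI : IsProbabilityMeasure (Measure.map (fun ω => P ω / E ω) μ) :=
    Measure.isProbabilityMeasure_map (hPm.div hEm).aemeasurable
  refine Measure.ext_of_Iic _ _ fun t => ?_
  rw [Measure.map_apply (f := fun ω => P ω / E ω) (hPm.div hEm) measurableSet_Iic,
      Measure.map_apply hmWo measurableSet_Iic]
  rcases le_or_gt t 0 with ht | ht
  · -- both sides are zero
    have hL : μ ((fun ω => P ω / E ω) ⁻¹' Set.Iic t) = 0 := by
      refine measure_mono_null (fun ω hω => ?_) (measure_union_null hPneg hEpos)
      simp only [Set.mem_preimage, Set.mem_Iic] at hω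
      by_contra hc
      simp only [Set.mem_union, Set.mem_setOf_eq, not_or, not_le] at hc
      have := div_pos hc.1 hc.2
      linarith
    have hR : μ ((fun ω => 1 / W ω ^ 2) ⁻¹' Set.Iic t) = 0 := by
      refine measure_mono_null (fun ω hω => ?_) hWpos
      simp only [Set.mem_preimage, Set.mem_Iic] at hω
      simp only [Set.mem_setOf_eq]
      by_contra hc
      push_neg at hc
      have := one_div_pos.mpr (pow_pos hc 2)
      linarith
    rw [hL, hR]
  · -- main case t > 0
    have hLeq : μ ((fun ω => P ω / E ω) ⁻¹' Set.Iic t) = μ {ω | P ω ≤ t * E ω} := by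
      apply measure_congr
      have h0 : ∀ᵐ ω ∂μ, 0 < E ω := by
        rw [ae_iff]
        simpa only [not_lt] using hEpos
      filter_upwards [h0] with ω hω
      rw [eq_iff_iff]
      change P ω / E ω ≤ t ↔ P ω ≤ t * E ω
      rw [div_le_iff₀ hω, mul_comm]
    have hS : MeasurableSet {q : ℝ × ℝ | q.1 ≤ t * q.2} :=
      measurableSet_le measurable_fst (measurable_const.mul measurable_snd)
    have hjoint : μ {ω | P ω ≤ t * E ω}
        = (Measure.map P μ).prod (Measure.map E μ) {q : ℝ × ℝ | q.1 ≤ t * q.2} := by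
      rw [← (indepFun_iff_map_prod_eq_prod_map_map hPm.aemeasurable hEm.aemeasurable).mp hPE,
          Measure.map_apply (hPm.prodMk hEm) hS]
      rfl
    have hpre : ∀ p : ℝ, 0 < p →
        Prod.mk p ⁻¹' {q : ℝ × ℝ | q.1 ≤ t * q.2} = Set.Ici (p / t) := by
      intro p hp
      ext e
      simp only [Set.mem_preimage, Set.mem_setOf_eq, Set.mem_Ici]
      constructor
      · intro h; rw [div_le_iff₀ ht]; linarith
      · intro h; have := (div_le_iff₀ ht).mp h; linarith
    have hPae : ∀ᵐ p ∂(Measure.map P μ), 0 < p := by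
      rw [ae_iff]
      have hset : {p : ℝ | ¬ 0 < p} = Set.Iic 0 := by ext p; simp [not_lt]
      rw [hset, Measure.map_apply hPm measurableSet_Iic]
      exact hPneg
    haveI : SFinite (Measure.map E μ) := by
      haveI : IsProbabilityMeasure (Measure.map E μ) := Measure.isProbabilityMeasure_map hEm.aemeasurable
      infer_instance
    have hcongr : (fun p => (Measure.map E μ) (Prod.mk p ⁻¹' {q : ℝ × ℝ | q.1 ≤ t * q.2}))
        =ᵐ[Measure.map P μ] fun p => ENNReal.ofReal (Real.exp (-(t⁻¹ * p))) := by
      filter_upwards [hPae] with p hp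
      rw [hpre p hp, hE, withDensity_apply _ measurableSet_Ici, exp_tail (by positivity)]
      rw [div_eq_inv_mul]
    have hgm : AEStronglyMeasurable (fun p : ℝ => Real.exp (-(t⁻¹ * p))) (Measure.map P μ) := by
      apply Continuous.aestronglyMeasurable
      fun_prop
    have hInt : Integrable (fun p : ℝ => Real.exp (-(t⁻¹ * p))) (Measure.map P μ) := by
      rw [integrable_map_measure hgm hPm.aemeasurable]
      exact hint t⁻¹ (by positivity)
    have hLHS : μ ((fun ω => P ω / E ω) ⁻¹' Set.Iic t)
        = ENNReal.ofReal (Real.exp (-(t⁻¹ ^ (α / 2)))) := by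
      rw [hLeq, hjoint, Measure.prod_apply hS, lintegral_congr_ae hcongr,
          ← ofReal_integral_eq_lintegral_ofReal hInt (ae_of_all _ fun p => (Real.exp_pos _).le),
          integral_map hPm.aemeasurable hgm, hP t⁻¹ (by positivity)]
    have hb : (0:ℝ) < t⁻¹ ^ ((1:ℝ)/2) := Real.rpow_pos_of_pos (inv_pos.mpr ht) _
    have hRset : (fun w : ℝ => 1 / w ^ 2) ⁻¹' Set.Iic t ∩ Set.Ioi 0
        = Set.Ici (t⁻¹ ^ ((1:ℝ)/2)) := by
      ext w
      simp only [Set.mem_inter_iff, Set.mem_preimage, Set.mem_Iic, Set.mem_Ioi, Set.mem_Ici]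
      constructor
      · rintro ⟨h1, h2⟩
        have h3 : 1 ≤ t * w ^ 2 := (div_le_iff₀ (pow_pos h2 2)).mp h1
        have h4 : t⁻¹ ≤ w ^ 2 := by
          nlinarith [mul_nonneg (inv_pos.mpr ht).le (sub_nonneg.mpr h3),
            mul_inv_cancel₀ ht.ne']
        have h5 := Real.rpow_le_rpow (inv_pos.mpr ht).le h4 (by norm_num : (0:ℝ) ≤ 1/2)
        calc t⁻¹ ^ ((1:ℝ)/2) ≤ (w ^ 2) ^ ((1:ℝ)/2) := h5
          _ = w := by
            rw [← Real.rpow_natCast w 2, ← Real.rpow_mul h2.le]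
            norm_num
      · intro h
        have hw : 0 < w := lt_of_lt_of_le hb h
        refine ⟨?_, hw⟩
        have h4 : t⁻¹ ≤ w ^ 2 := by
          have h5 := pow_le_pow_left₀ hb.le h 2
          have h6 : (t⁻¹ ^ ((1:ℝ)/2)) ^ 2 = t⁻¹ := by
            rw [← Real.rpow_natCast (t⁻¹ ^ ((1:ℝ)/2)) 2, ← Real.rpow_mul (inv_pos.mpr ht).le]
            norm_num
          linarith
        rw [div_le_iff₀ (pow_pos hw 2)]
        nlinarith [mul_inv_cancel₀ ht.ne']
    have hzero : ∀ A : Set ℝ, MeasurableSet A →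
        (∫⁻ w in A, ENNReal.ofReal (if 0 < w then α * w ^ (α - 1) * Real.exp (-(w ^ α)) else 0))
        = ∫⁻ w in A ∩ Set.Ioi 0,
            ENNReal.ofReal (if 0 < w then α * w ^ (α - 1) * Real.exp (-(w ^ α)) else 0) := by
      intro A hA
      rw [← lintegral_indicator hA, ← lintegral_indicator (hA.inter measurableSet_Ioi)]
      congr 1
      funext w
      by_cases h0 : 0 < w <;> by_cases hAw : w ∈ A <;>
        simp [Set.indicator_apply, h0, hAw]
    have hexp : (t⁻¹ ^ ((1:ℝ)/2)) ^ α = t⁻¹ ^ (α / 2) := by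
      rw [← Real.rpow_mul (inv_pos.mpr ht).le]
      congr 1
      ring
    have hRHS : μ ((fun ω => 1 / W ω ^ 2) ⁻¹' Set.Iic t)
        = ENNReal.ofReal (Real.exp (-(t⁻¹ ^ (α / 2)))) := by
      have hid : (fun ω => 1 / W ω ^ 2) ⁻¹' Set.Iic t
          = W ⁻¹' ((fun w : ℝ => 1 / w ^ 2) ⁻¹' Set.Iic t) := rfl
      rw [hid, ← Measure.map_apply hWm (hmW measurableSet_Iic), hW,
          withDensity_apply _ (hmW measurableSet_Iic), hzero _ (hmW measurableSet_Iic),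
          hRset, weibull_tail hα hb, hexp]
    rw [hLHS, hRHS]
end

section
/- Let Y = μ + √P(λ|Z₀| + Σ^{1/2}Z₁) as above, and let E be an exponential random variable with mean 1 independent of (P, Z₀, Z₁). Suppose 1/W =ᵈ √(P/E) where W is Weibull with shape α. Then V := (Y − μ)/√E has the hierarchical representation: V | T=t, W=w ~ N_d(λt, w^{−2}Σ), T | W=w ~ HN(0, w^{−2}), W ~ Weibull(α). -/
open MeasureTheory ProbabilityTheory Matrix

/-- Theorem 2 of the paper: if `Y = μ + √P(|Z₀|·λ + Σ^{1/2}Z₁)`, `E` is standard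
exponential with `√(P/E) =ᵈ 1/W` for `W` Weibull with shape `α`, then
`V = (Y − μ)/√E` has the same law as `(1/W)(|Z₀|·λ + Σ^{1/2}Z₁)`, i.e. it admits
the hierarchy `V | T,W ~ N_d(λT, W⁻²Σ)`, `T | W ~ HN(0, W⁻²)`, `W ~ Weibull(α)`. -/
theorem stmt6 {Ω : Type*} [MeasurableSpace Ω] (μ : Measure Ω) [IsProbabilityMeasure μ]
    (d : ℕ) (μv lam : Fin d → ℝ) (Shalf : Matrix (Fin d) (Fin d) ℝ)
    (α : ℝ) (hα : 0 < α) (hα2 : α ≤ 2)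
    (P E W : Ω → ℝ) (Z0 : Ω → ℝ) (Z1 : Ω → Fin d → ℝ)
    (hPpos : ∀ ω, 0 < P ω) (hEpos : ∀ ω, 0 < E ω) (hWpos : ∀ ω, 0 < W ω)
    (hW : Measure.map W μ = volume.withDensity fun w =>
      ENNReal.ofReal (if 0 < w then α * w ^ (α - 1) * Real.exp (-(w ^ α)) else 0))
    (hratio : Measure.map (fun ω => Real.sqrt (P ω / E ω)) μ
      = Measure.map (fun ω => 1 / W ω) μ)
    (hindep1 : IndepFun (fun ω => P ω / E ω) (fun ω => (Z0 ω, Z1 ω)) μ)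
    (hindep2 : IndepFun W (fun ω => (Z0 ω, Z1 ω)) μ)
    (Y : Ω → Fin d → ℝ)
    (hY : ∀ ω, Y ω = μv + Real.sqrt (P ω) • (|Z0 ω| • lam + Shalf.mulVec (Z1 ω))) :
    Measure.map (fun ω => (1 / Real.sqrt (E ω)) • (Y ω - μv)) μ
      = Measure.map (fun ω => (1 / W ω) • (|Z0 ω| • lam + Shalf.mulVec (Z1 ω))) μ := by
  classical
  set G : Ω → Fin d → ℝ := fun ω => |Z0 ω| • lam + Shalf.mulVec (Z1 ω) with hG
  set s : Ω → ℝ := fun ω => Real.sqrt (P ω / E ω) with hs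
  set t : Ω → ℝ := fun ω => 1 / W ω with ht
  have hspos : ∀ ω, 0 < s ω := fun ω => Real.sqrt_pos.2 (div_pos (hPpos ω) (hEpos ω))
  have htpos : ∀ ω, 0 < t ω := fun ω => by
    simpa [ht] using div_pos one_pos (hWpos ω)
  -- LHS function equals s • G pointwise
  have hLHS : (fun ω => (1 / Real.sqrt (E ω)) • (Y ω - μv)) = fun ω => s ω • G ω := by
    funext ω
    rw [hY ω, add_sub_cancel_left, smul_smul]
    have : (1 / Real.sqrt (E ω)) * Real.sqrt (P ω) = s ω := by
      rw [hs]
      show _ = Real.sqrt (P ω / E ω)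
      rw [Real.sqrt_div (hPpos ω).le, one_div, div_eq_inv_mul]
    rw [this]
  rw [hLHS]
  -- W is a.e. measurable
  have hWaem : AEMeasurable W μ := by
    by_contra h
    have h0 : Measure.map W μ = 0 := Measure.map_of_not_aemeasurable h
    rw [hW] at h0
    have hdm : Measurable (fun w : ℝ =>
        ENNReal.ofReal (if 0 < w then α * w ^ (α - 1) * Real.exp (-(w ^ α)) else 0)) := by
      refine Measurable.ennreal_ofReal ?_
      refine Measurable.ite (measurableSet_lt measurable_const measurable_id) ?_ measurable_const
      exact (measurable_const.mul (measurable_id'.pow_const _)).mul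
        ((measurable_id'.pow_const _).neg.exp)
    have hz := (withDensity_eq_zero_iff hdm.aemeasurable).1 h0
    have hsub : Set.Ioi (0 : ℝ) ⊆ {w : ℝ |
        ENNReal.ofReal (if 0 < w then α * w ^ (α - 1) * Real.exp (-(w ^ α)) else 0) ≠ 0} := by
      intro w hw
      have hwpos : (0 : ℝ) < w := hw
      have hpos : 0 < α * w ^ (α - 1) * Real.exp (-(w ^ α)) :=
        mul_pos (mul_pos hα (Real.rpow_pos_of_pos hwpos _)) (Real.exp_pos _)
      simp only [Set.mem_setOf_eq, if_pos hwpos]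
      exact (ENNReal.ofReal_pos.2 hpos).ne'
    have : (volume : Measure ℝ) (Set.Ioi (0 : ℝ)) = 0 :=
      measure_mono_null hsub hz
    simp [Real.volume_Ioi] at this
  have htaem : AEMeasurable t μ := by
    have : AEMeasurable (fun ω => (W ω)⁻¹) μ := hWaem.inv
    simpa [ht, one_div] using this
  -- s is a.e. measurable
  have hsaem : AEMeasurable s μ := by
    by_contra h
    have h0 : Measure.map s μ = 0 := Measure.map_of_not_aemeasurable h
    rw [hs] at h0
    rw [h0] at hratio
    have : IsProbabilityMeasure (Measure.map t μ) := Measure.isProbabilityMeasure_map htaem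
    exact (IsProbabilityMeasure.ne_zero _) (ht ▸ hratio.symm)
  -- helper: smul of aemeasurable
  have smul_aem : ∀ (f : Ω → ℝ) (g : Ω → Fin d → ℝ), AEMeasurable f μ → AEMeasurable g μ →
      AEMeasurable (fun ω => f ω • g ω) μ := fun f g hf hg =>
    ((continuous_smul : Continuous fun p : ℝ × (Fin d → ℝ) => p.1 • p.2).measurable.comp_aemeasurable (hf.prodMk hg))
  by_cases hGaem : AEMeasurable G μ
  · -- main case: use independence
    have hsqrt : Measurable Real.sqrt := Real.continuous_sqrt.measurable
    have hgmap : Measurable (fun p : ℝ × (Fin d → ℝ) => |p.1| • lam + Shalf.mulVec p.2) := by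
      have h1 : Continuous fun p : ℝ × (Fin d → ℝ) => |p.1| • lam :=
        (continuous_abs.comp continuous_fst).smul continuous_const
      have h2 : Continuous fun p : ℝ × (Fin d → ℝ) => Shalf.mulVec p.2 := by
        have := (Shalf.mulVecLin.continuous_of_finiteDimensional).comp
          (continuous_snd : Continuous fun p : ℝ × (Fin d → ℝ) => p.2)
        exact this
      exact (h1.add h2).measurable
    have hind1 : IndepFun s G μ := by
      have := hindep1.comp hsqrt hgmap
      exact this
    have hind2 : IndepFun t G μ := by
      have hone : Measurable (fun x : ℝ => 1 / x) := by
        simpa [one_div] using (measurable_inv : Measurable (Inv.inv : ℝ → ℝ))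
      have := hindep2.comp hone hgmap
      exact this
    have hmap1 : μ.map (fun ω => (s ω, G ω)) = (μ.map s).prod (μ.map G) :=
      (indepFun_iff_map_prod_eq_prod_map_map hsaem hGaem).1 hind1
    have hmap2 : μ.map (fun ω => (t ω, G ω)) = (μ.map t).prod (μ.map G) :=
      (indepFun_iff_map_prod_eq_prod_map_map htaem hGaem).1 hind2
    have hsmulm : Measurable (fun p : ℝ × (Fin d → ℝ) => p.1 • p.2) :=
      (continuous_smul : Continuous fun p : ℝ × (Fin d → ℝ) => p.1 • p.2).measurable
    calc μ.map (fun ω => s ω • G ω)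
        = (μ.map (fun ω => (s ω, G ω))).map (fun p : ℝ × (Fin d → ℝ) => p.1 • p.2) :=
          (AEMeasurable.map_map_of_aemeasurable hsmulm.aemeasurable
            (hsaem.prodMk hGaem)).symm
      _ = ((μ.map s).prod (μ.map G)).map (fun p : ℝ × (Fin d → ℝ) => p.1 • p.2) := by
          rw [hmap1]
      _ = ((μ.map t).prod (μ.map G)).map (fun p : ℝ × (Fin d → ℝ) => p.1 • p.2) := by
          rw [hs, ht] at *
          rw [hratio]
      _ = (μ.map (fun ω => (t ω, G ω))).map (fun p : ℝ × (Fin d → ℝ) => p.1 • p.2) := by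
          rw [hmap2]
      _ = μ.map (fun ω => t ω • G ω) :=
          AEMeasurable.map_map_of_aemeasurable hsmulm.aemeasurable (htaem.prodMk hGaem)
  · -- degenerate case: both sides are the zero measure
    have h1 : ¬ AEMeasurable (fun ω => s ω • G ω) μ := by
      intro h
      apply hGaem
      have : AEMeasurable (fun ω => (s ω)⁻¹ • (s ω • G ω)) μ :=
        smul_aem _ _ hsaem.inv h
      convert this using 1
      funext ω
      rw [smul_smul, inv_mul_cancel₀ (hspos ω).ne', one_smul]
    have h2 : ¬ AEMeasurable (fun ω => t ω • G ω) μ := by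
      intro h
      apply hGaem
      have : AEMeasurable (fun ω => (t ω)⁻¹ • (t ω • G ω)) μ :=
        smul_aem _ _ htaem.inv h
      convert this using 1
      funext ω
      rw [smul_smul, inv_mul_cancel₀ (htpos ω).ne', one_smul]
    rw [Measure.map_of_not_aemeasurable h1, Measure.map_of_not_aemeasurable h2]
end

section
/- The posterior density normalization: for the hierarchy V | T=t, W=w ~ N_d(λt, w^{−2}Σ), T | W=w ~ HN(0, w^{−2}), W ~ Weibull(α), the marginal joint density of (V, W) at (v, w) equals √(2πδ)·W₀·w^{d+α−1} exp(−w^α − w² d*(v)/2)·Φ(m*; 0, √δ/w), where W₀ = 2α/((2π)^{(d+1)/2}|Σ|^{1/2}), Ω = Σ + λλ', d*(v) = v'Ω^{−1}v, m* = λ'Ω^{−1}v, δ = 1 − λ'Ω^{−1}λ, obtained by integrating out t. -/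
open MeasureTheory Matrix

/-- Density of the `d`-dimensional normal distribution with mean `m` and
covariance matrix `C`. -/
noncomputable def mvNormalPdf {d : ℕ} (m : Fin d → ℝ) (C : Matrix (Fin d) (Fin d) ℝ)
    (x : Fin d → ℝ) : ℝ :=
  (2 * Real.pi) ^ (-(d : ℝ) / 2) * C.det ^ (-(1 : ℝ) / 2) *
    Real.exp (-((x - m) ⬝ᵥ C⁻¹.mulVec (x - m)) / 2)

/-- Half-normal density with variance parameter `p` (i.e. `HN(0, p)`). -/
noncomputable def halfNormalPdf (p t : ℝ) : ℝ :=
  if 0 < t then 2 / Real.sqrt (2 * Real.pi * p) * Real.exp (-(t ^ 2) / (2 * p)) else 0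

/-- Cdf of the normal distribution with mean `η` and standard deviation `ξ`. -/
noncomputable def normalCdf (x η ξ : ℝ) : ℝ :=
  ∫ s in Set.Iic x, 1 / (ξ * Real.sqrt (2 * Real.pi)) * Real.exp (-((s - η) ^ 2) / (2 * ξ ^ 2))

namespace Stmt19Aux

variable {d : ℕ}

theorem mul_vecMulVec (M : Matrix (Fin d) (Fin d) ℝ) (a b : Fin d → ℝ) :
    M * vecMulVec a b = vecMulVec (M.mulVec a) b := by
  ext i j
  simp [Matrix.mul_apply, vecMulVec_apply, mulVec, dotProduct, Finset.sum_mul, mul_assoc]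

theorem vecMulVec_mul (M : Matrix (Fin d) (Fin d) ℝ) (a b : Fin d → ℝ) :
    vecMulVec a b * M = vecMulVec a (M.transpose.mulVec b) := by
  ext i j
  simp [Matrix.mul_apply, vecMulVec_apply, mulVec, dotProduct, Finset.mul_sum, mul_comm, mul_assoc, mul_left_comm]

theorem vecMulVec_mulVec (a b x : Fin d → ℝ) :
    (vecMulVec a b).mulVec x = (b ⬝ᵥ x) • a := by
  ext i
  simp only [vecMulVec_apply, mulVec, dotProduct, Pi.smul_apply, smul_eq_mul]
  rw [Finset.sum_mul]
  exact Finset.sum_congr rfl fun k _ => by ring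

theorem SM (lam : Fin d → ℝ) (Smat : Matrix (Fin d) (Fin d) ℝ) (hS : Smat.PosDef) :
    (Smat + vecMulVec lam lam)⁻¹ =
      Smat⁻¹ - (1 + lam ⬝ᵥ Smat⁻¹.mulVec lam)⁻¹ •
        vecMulVec (Smat⁻¹.mulVec lam) (Smat⁻¹.mulVec lam) := by
  have hdet : IsUnit Smat.det := isUnit_iff_ne_zero.mpr hS.det_pos.ne'
  have hSi : Smat⁻¹.transpose = Smat⁻¹ := by
    have := (hS.inv).1
    simpa [Matrix.IsHermitian] using this
  set u := Smat⁻¹.mulVec lam with hu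
  set c := lam ⬝ᵥ u with hc
  have hc0 : 0 ≤ c := by
    have := hS.inv.posSemidef.dotProduct_mulVec_nonneg lam
    simpa [hc, hu] using this
  have h1c : (1 : ℝ) + c ≠ 0 := by positivity
  apply Matrix.inv_eq_right_inv
  have hSu : Smat.mulVec u = lam := by
    rw [hu, Matrix.mulVec_mulVec, Matrix.mul_nonsing_inv _ hdet, Matrix.one_mulVec]
  rw [Matrix.add_mul, Matrix.mul_sub, Matrix.mul_sub, Matrix.mul_smul, Matrix.mul_smul,
    Matrix.mul_nonsing_inv _ hdet, mul_vecMulVec, hSu, vecMulVec_mul, hSi, ← hu,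
    mul_vecMulVec, vecMulVec_mulVec, ← hc]
  have : vecMulVec ((c • lam)) u = c • vecMulVec lam u := by
    ext i j; simp [vecMulVec_apply, mul_assoc]
  rw [this, smul_smul]
  have h2 : vecMulVec lam u - ((1+c)⁻¹*c) • vecMulVec lam u
      = ((1:ℝ) - (1+c)⁻¹*c) • vecMulVec lam u := by rw [sub_smul, one_smul]
  rw [h2, sub_add_eq_add_sub, add_sub_assoc, ← sub_smul]
  have hexp : (1:ℝ) - (1+c)⁻¹*c - (1+c)⁻¹ = 0 := by field_simp; ring
  rw [hexp, zero_smul, add_zero]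

theorem gauss_Ioi (b m : ℝ) :
    ∫ t in Set.Ioi (0:ℝ), Real.exp (-(b * (t - m)^2)) =
      ∫ s in Set.Iic m, Real.exp (-(b * s^2)) := by
  have h2 : ∫ x in Set.Iic (0:ℝ), Real.exp (-(b * (x + m)^2))
      = ∫ s in Set.Iic m, Real.exp (-(b * s^2)) := by
    have hemb := measurableEmbedding_addRight (m : ℝ)
    have hmp := measurePreserving_add_right (volume : Measure ℝ) m
    have := hmp.setIntegral_preimage_emb hemb
      (fun s => Real.exp (-(b * s^2))) (Set.Iic m)
    have hset : (fun x : ℝ => x + m) ⁻¹' Set.Iic m = Set.Iic 0 := by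
      ext x; simp [Set.mem_Iic]
    rw [hset] at this
    exact this
  rw [← h2]
  have h1 : ∫ t in Set.Ioi (0:ℝ), Real.exp (-(b * (t - m)^2))
      = ∫ x in Set.Iic (-(0:ℝ)), Real.exp (-(b * (x + m)^2)) := by
    rw [← integral_comp_neg_Ioi]
    refine setIntegral_congr_fun measurableSet_Ioi (fun t _ => ?_)
    ring_nf
  simpa using h1

end Stmt19Aux

open Stmt19Aux in
/-- The joint density of `(V, W)` in the hierarchy
`V | T=t, W=w ~ N_d(λt, w⁻²Σ)`, `T | W=w ~ HN(0, w⁻²)`, `W ~ Weibull(α)`,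
obtained by integrating out `t ∈ (0,∞)`. -/
theorem stmt19 (d : ℕ) (lam : Fin d → ℝ) (Smat : Matrix (Fin d) (Fin d) ℝ) (hS : Smat.PosDef)
    (α : ℝ) (hα : 0 < α) (hα2 : α ≤ 2) (w : ℝ) (hw : 0 < w) (v : Fin d → ℝ) :
    ∫ t in Set.Ioi (0 : ℝ),
        mvNormalPdf (t • lam) (w⁻¹ ^ 2 • Smat) v * halfNormalPdf (w⁻¹ ^ 2) t *
          (α * w ^ (α - 1) * Real.exp (-(w ^ α)))
      = Real.sqrt (2 * Real.pi * (1 - lam ⬝ᵥ (Smat + vecMulVec lam lam)⁻¹.mulVec lam)) *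
          (2 * α / ((2 * Real.pi) ^ (((d : ℝ) + 1) / 2) * Real.sqrt Smat.det)) *
          w ^ ((d : ℝ) + α - 1) *
          Real.exp (-(w ^ α) - w ^ 2 * (v ⬝ᵥ (Smat + vecMulVec lam lam)⁻¹.mulVec v) / 2) *
          normalCdf (lam ⬝ᵥ (Smat + vecMulVec lam lam)⁻¹.mulVec v) 0
            (Real.sqrt (1 - lam ⬝ᵥ (Smat + vecMulVec lam lam)⁻¹.mulVec lam) / w) := by
  have hdet : (0:ℝ) < Smat.det := hS.det_pos
  have hdetU : IsUnit Smat.det := isUnit_iff_ne_zero.mpr hdet.ne'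
  have hSi : Smat⁻¹.transpose = Smat⁻¹ := by
    have := (hS.inv).1
    simpa [Matrix.IsHermitian] using this
  set u := Smat⁻¹.mulVec lam with hu
  set c := lam ⬝ᵥ u with hc
  have hc0 : 0 ≤ c := by
    have := hS.inv.posSemidef.dotProduct_mulVec_nonneg lam
    simpa [hc, hu] using this
  have h1c : (0:ℝ) < 1 + c := by positivity
  set k := ((1:ℝ) + c)⁻¹ with hk
  have hk0 : (0:ℝ) < k := by positivity
  set p := u ⬝ᵥ v with hp
  set q := v ⬝ᵥ Smat⁻¹.mulVec v with hq
  -- the inverse of Ω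
  have hSM := SM lam Smat hS
  have hΩ : ∀ x : Fin d → ℝ, (Smat + vecMulVec lam lam)⁻¹.mulVec x
      = Smat⁻¹.mulVec x - (k * (u ⬝ᵥ x)) • u := by
    intro x
    rw [hSM, Matrix.sub_mulVec, Matrix.smul_mulVec, vecMulVec_mulVec, smul_smul, ← hu, ← hc, ← hk]
  have hsymv : lam ⬝ᵥ Smat⁻¹.mulVec v = p := by
    have h : lam ᵥ* Smat⁻¹ = u := by rw [hu, ← Matrix.vecMul_transpose, hSi]
    rw [Matrix.dotProduct_mulVec, h, hp]
  have hδ : 1 - lam ⬝ᵥ (Smat + vecMulVec lam lam)⁻¹.mulVec lam = k := by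
    rw [hΩ, dotProduct_sub, dotProduct_smul, ← hc, dotProduct_comm u lam, ← hc]
    rw [hk]; field_simp; linear_combination c^2 * inv_mul_cancel₀ h1c.ne'
  have hm : lam ⬝ᵥ (Smat + vecMulVec lam lam)⁻¹.mulVec v = k * p := by
    rw [hΩ, dotProduct_sub, dotProduct_smul, hsymv, ← hp, ← hc]
    rw [hk]; field_simp; linear_combination (-(c*p)) * inv_mul_cancel₀ h1c.ne'
  have hd : v ⬝ᵥ (Smat + vecMulVec lam lam)⁻¹.mulVec v = q - k * p^2 := by
    rw [hΩ, dotProduct_sub, dotProduct_smul, ← hq, ← hp, dotProduct_comm v u, ← hp, smul_eq_mul]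
    ring
  rw [hδ, hm, hd]
  -- quadratic completion
  have hquad : ∀ t : ℝ, (v - t • lam) ⬝ᵥ Smat⁻¹.mulVec (v - t • lam) + t^2
      = (q - k*p^2) + (t - k*p)^2 * (1+c) := by
    intro t
    have h1 : Smat⁻¹.mulVec (v - t • lam) = Smat⁻¹.mulVec v - t • u := by
      rw [Matrix.mulVec_sub, Matrix.mulVec_smul, hu]
    rw [h1]
    simp only [dotProduct_sub, sub_dotProduct, dotProduct_smul, smul_dotProduct, smul_eq_mul]
    rw [← hq, hsymv, dotProduct_comm v u, ← hp, ← hc, hk]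
    field_simp
    ring
  -- the scaled matrix
  have hw0 : (w:ℝ) ≠ 0 := hw.ne'
  have hinv : (w⁻¹ ^ 2 • Smat)⁻¹ = (w^2 : ℝ) • Smat⁻¹ := by
    apply Matrix.inv_eq_right_inv
    rw [Matrix.smul_mul, Matrix.mul_smul, smul_smul, Matrix.mul_nonsing_inv _ hdetU]
    have : (w⁻¹^2 * w^2 : ℝ) = 1 := by field_simp
    rw [this, one_smul]
  have hdet2 : (w⁻¹ ^ 2 • Smat).det = (w⁻¹^2)^d * Smat.det := by
    rw [Matrix.det_smul, Fintype.card_fin]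
  set K := (2*Real.pi)^(-(d:ℝ)/2) * ((w⁻¹^2)^d * Smat.det)^(-(1:ℝ)/2)
      * (2/Real.sqrt (2*Real.pi*(w⁻¹^2))) * (α * w^(α-1) * Real.exp (-(w^α)))
      * Real.exp (-(w^2*(q - k*p^2))/2) with hK
  have hpt : Set.EqOn
      (fun t => mvNormalPdf (t • lam) (w⁻¹ ^ 2 • Smat) v * halfNormalPdf (w⁻¹ ^ 2) t *
          (α * w ^ (α - 1) * Real.exp (-(w ^ α))))
      (fun t => K * Real.exp (-(w^2*(1+c)/2 * (t - k*p)^2))) (Set.Ioi 0) := by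
    intro t ht
    simp only
    unfold mvNormalPdf halfNormalPdf
    rw [if_pos (Set.mem_Ioi.mp ht), hinv, hdet2, Matrix.smul_mulVec, dotProduct_smul,
      smul_eq_mul]
    have hexp : Real.exp (-(w^2 * ((v - t • lam) ⬝ᵥ Smat⁻¹.mulVec (v - t • lam)))/2)
        * Real.exp (-(t^2)/(2*(w⁻¹^2)))
        = Real.exp (-(w^2*(q - k*p^2))/2) * Real.exp (-(w^2*(1+c)/2 * (t - k*p)^2)) := by
      rw [← Real.exp_add, ← Real.exp_add]
      congr 1
      have h2 : -(t^2)/(2*(w⁻¹^2)) = -(w^2*t^2)/2 := by field_simp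
      rw [h2]
      linear_combination (-(w^2)/2) * hquad t
    calc (2*Real.pi)^(-(d:ℝ)/2) * ((w⁻¹^2)^d * Smat.det)^(-(1:ℝ)/2)
          * Real.exp (-(w ^ 2 * ((v - t • lam) ⬝ᵥ Smat⁻¹ *ᵥ (v - t • lam))) / 2)
          * (2 / Real.sqrt (2 * Real.pi * w⁻¹ ^ 2) * Real.exp (-t ^ 2 / (2 * w⁻¹ ^ 2)))
          * (α * w ^ (α - 1) * Real.exp (-w ^ α))
        = ((2*Real.pi)^(-(d:ℝ)/2) * ((w⁻¹^2)^d * Smat.det)^(-(1:ℝ)/2)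
          * (2/Real.sqrt (2*Real.pi*(w⁻¹^2))) * (α * w^(α-1) * Real.exp (-(w^α))))
          * (Real.exp (-(w^2 * ((v - t • lam) ⬝ᵥ Smat⁻¹.mulVec (v - t • lam)))/2)
             * Real.exp (-(t^2)/(2*(w⁻¹^2)))) := by ring
      _ = _ := by rw [hexp, hK]; ring
  rw [setIntegral_congr_fun measurableSet_Ioi hpt, MeasureTheory.integral_const_mul,
    gauss_Ioi (w^2*(1+c)/2) (k*p)]
  have hcdf : normalCdf (k*p) 0 (Real.sqrt k / w)
      = 1/((Real.sqrt k / w) * Real.sqrt (2*Real.pi)) *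
        ∫ s in Set.Iic (k*p), Real.exp (-(w^2*(1+c)/2 * s^2)) := by
    unfold normalCdf
    rw [MeasureTheory.integral_const_mul]
    congr 1
    refine setIntegral_congr_fun measurableSet_Iic (fun s _ => ?_)
    congr 1
    have hsq : (Real.sqrt k / w)^2 = k/w^2 := by
      rw [div_pow, Real.sq_sqrt hk0.le]
    rw [sub_zero, hsq, hk]
    field_simp
  rw [hcdf]
  have hKc : K = Real.sqrt (2*Real.pi*k)
      * (2*α/((2*Real.pi)^(((d:ℝ)+1)/2)*Real.sqrt Smat.det)) * w^((d:ℝ)+α-1)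
      * Real.exp (-w^α - w^2*(q - k*p^2)/2)
      * (1/((Real.sqrt k/w)*Real.sqrt (2*Real.pi))) := by
    have hsPi : (0:ℝ) < 2*Real.pi := by positivity
    have e1 : ((w⁻¹^2)^d * Smat.det : ℝ)^(-(1:ℝ)/2)
        = w^(d:ℝ) * Smat.det^(-(1:ℝ)/2) := by
      rw [Real.mul_rpow (by positivity) hdet.le]
      congr 1
      have ha : (w⁻¹^2 : ℝ) = w ^ (-2:ℝ) := by
        rw [Real.rpow_neg hw.le, show ((2:ℝ)) = ((2:ℕ):ℝ) from by norm_num,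
          Real.rpow_natCast, inv_pow]
      rw [ha, ← Real.rpow_natCast (w ^ (-2:ℝ)) d, ← Real.rpow_mul hw.le,
        ← Real.rpow_mul hw.le]
      congr 1
      ring
    have e2 : Real.sqrt (2*Real.pi*(w⁻¹^2)) = Real.sqrt (2*Real.pi) * w⁻¹ := by
      rw [Real.sqrt_mul (by positivity), Real.sqrt_sq (by positivity)]
    have e3 : Real.sqrt (2*Real.pi*k) = Real.sqrt (2*Real.pi) * Real.sqrt k := by
      rw [Real.sqrt_mul (by positivity)]
    have e4 : (Smat.det : ℝ)^(-(1:ℝ)/2) = (Real.sqrt Smat.det)⁻¹ := by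
      rw [Real.sqrt_eq_rpow, ← Real.rpow_neg hdet.le]
      norm_num
    have e5 : (2*Real.pi)^(-(d:ℝ)/2) * (2*Real.pi)^(((d:ℝ)+1)/2) = Real.sqrt (2*Real.pi) := by
      rw [← Real.rpow_add hsPi, Real.sqrt_eq_rpow]
      congr 1
      ring
    have e6 : w^((d:ℝ)) * w^(α-1) = w^((d:ℝ)+α-1) := by
      rw [← Real.rpow_add hw]
      congr 1
      ring
    have e7 : Real.exp (-w^α - w^2*(q - k*p^2)/2)
        = Real.exp (-(w^α)) * Real.exp (-(w^2*(q - k*p^2))/2) := by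
      rw [← Real.exp_add]
      congr 1
      ring
    have hB : (0:ℝ) < (2*Real.pi)^(((d:ℝ)+1)/2) := Real.rpow_pos_of_pos hsPi _
    have hsD : (0:ℝ) < Real.sqrt Smat.det := Real.sqrt_pos.mpr hdet
    have hsk : (0:ℝ) < Real.sqrt k := Real.sqrt_pos.mpr hk0
    have hsPi' : (0:ℝ) < Real.sqrt (2*Real.pi) := Real.sqrt_pos.mpr hsPi
    rw [hK, e1, e2, e3, e4, e7, ← e6, ← e5]
    field_simp
  rw [hKc]
  ring
end
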